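/- For v, w in the Weyl group W, the function ψ^v defined by ψ^v(T_w) = δ_{v,w} satisfies ψ^v(w) = 0 unless v ≤ w in Bruhat order. -/

import Mathlib

/-!
STATEMENT 5: For `v, w` in the Weyl group `W`, the function `ψ^v` defined by
`ψ^v(T_w) = δ_{v,w}` satisfies `ψ^v(w) = 0` unless `v ≤ w` in Bruhat order.

Setup.  `W` is the Weyl group of a Coxeter system `cs`.  `F` plays the role of
the fraction field `Q(T)` of `R(T) = ℤ[P]`, on which `W` acts by ring
automorphisms (`MulSemiringAction`).  The K-NilHecke ring `𝕂 ⊆ 𝕂_{Q(T)}` is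
realized faithfully by additive operators on `F`: `q ∈ Q(T)` acts by left
multiplication `mulOp q`, a group element `w` acts by `grpOp w`, and
`T_i = (1 - e^{α_i})⁻¹ (r_i - 1)` where `a i = e^{α_i}`; `T_w` is the product
of the `T_i` along a reduced word for `w`.  `Pair` is the evaluation pairing
`⟨·,·⟩ : 𝕂_{Q(T)} × Fun(W,Q(T)) → Q(T)`, left `Q(T)`-linear with
`⟨w, ψ⟩ = ψ(w)`, and `ψ^v` is the unique function with `⟨T_u, ψ^v⟩ = δ_{v,u}`.
Bruhat order: `v ≤ w` iff some reduced word for `w` has a subword with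
product `v`.
-/

open scoped Classical

noncomputable section

/-- Left multiplication by `q : F` as an additive endomorphism of `F`. -/
def mulOp {F : Type*} [Field F] (q : F) : Module.End ℤ F :=
  (AddMonoidHom.mulLeft q).toIntLinearMap

/-- The action of a group element `w : W` on `F` as an additive endomorphism. -/
def grpOp {W F : Type*} [Field F] [Group W] [MulSemiringAction W F] (w : W) :
    Module.End ℤ F :=
  (DistribMulAction.toAddMonoidHom F w).toIntLinearMap

/-- The Demazure element `T = (1 - a)⁻¹ (w - 1)` (with `a = e^{α_i}`,
`w = r_i`) as an operator on `F`. -/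
def TOp {W F : Type*} [Field F] [Group W] [MulSemiringAction W F]
    (a : F) (w : W) : Module.End ℤ F :=
  mulOp (1 - a)⁻¹ * (grpOp w - 1)

/-- `T_ω = T_{i_1} ⋯ T_{i_N}` for a word `ω = (i_1, …, i_N)`. -/
def Tword {B W F : Type*} [Field F] [Group W] [MulSemiringAction W F]
    {M : CoxeterMatrix B} (cs : CoxeterSystem M W) (a : B → F) (ω : List B) :
    Module.End ℤ F :=
  (ω.map (fun i => TOp (a i) (cs.simple i))).prod

/-- Bruhat order: `v ≤ w` iff some reduced word for `w` admits a subword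
whose product is `v`. -/
def BruhatLE {B W : Type*} [Group W] {M : CoxeterMatrix B}
    (cs : CoxeterSystem M W) (v w : W) : Prop :=
  ∃ ω : List B, cs.IsReduced ω ∧ cs.wordProd ω = w ∧
    ∃ ω' : List B, ω'.Sublist ω ∧ cs.wordProd ω' = v

section Aux

variable {W F : Type*} [Field F] [Group W] [MulSemiringAction W F]

lemma mulOp_apply (q x : F) : mulOp q x = q * x := rfl
lemma grpOp_apply (u : W) (x : F) : grpOp u x = u • x := rfl

lemma mulOp_mul (q r : F) : mulOp (q * r) = mulOp q * mulOp r := by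
  ext x; simp [mulOp_apply, Module.End.mul_apply, mul_assoc]

lemma mulOp_one : mulOp (1 : F) = 1 := by ext x; simp [mulOp_apply]

lemma mulOp_zero : mulOp (0 : F) = 0 := by ext x; simp [mulOp_apply]

lemma grpOp_one : grpOp (1 : W) = (1 : Module.End ℤ F) := by
  ext x; simp [grpOp_apply]

lemma grpOp_mul (u v : W) : (grpOp (u * v) : Module.End ℤ F) = grpOp u * grpOp v := by
  ext x; simp [grpOp_apply, Module.End.mul_apply, mul_smul]

lemma TOp_apply (a : F) (u : W) (x : F) : TOp a u x = (1 - a)⁻¹ * (u • x - x) := by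
  simp [TOp, Module.End.mul_apply, mulOp_apply, grpOp_apply, LinearMap.sub_apply]

lemma TOp_mulOp (a q : F) (u : W) :
    TOp a u * mulOp q = mulOp (u • q) * TOp a u + mulOp ((1 - a)⁻¹ * (u • q - q)) := by
  ext x
  simp only [Module.End.mul_apply, LinearMap.add_apply, TOp_apply, mulOp_apply, smul_mul']
  ring

lemma TOp_sq (a : F) (u : W) (hu : u * u = 1) :
    TOp a u * TOp a u = mulOp (-((1 - a)⁻¹ + u • (1 - a)⁻¹)) * TOp a u := by
  ext x
  have h2 : u • (u • x) = x := by rw [smul_smul, hu, one_smul]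
  simp only [Module.End.mul_apply, TOp_apply, mulOp_apply, smul_sub, smul_mul', h2]
  ring

lemma grp_decomp (a : F) (ha : a ≠ 1) (u : W) :
    grpOp u = mulOp (1 - a) * TOp a u + 1 := by
  have h : mulOp (1 - a) * mulOp (1 - a)⁻¹ = 1 := by
    rw [← mulOp_mul, mul_inv_cancel₀ (sub_ne_zero.mpr (Ne.symm ha)), mulOp_one]
  rw [TOp, ← mul_assoc, h, one_mul]
  abel

variable {B : Type*} {M : CoxeterMatrix B} (cs : CoxeterSystem M W)

lemma Tword_nil (a : B → F) : Tword cs a [] = 1 := by simp [Tword]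

lemma Tword_cons (a : B → F) (i : B) (ω : List B) :
    Tword cs a (i :: ω) = TOp (a i) (cs.simple i) * Tword cs a ω := by
  simp [Tword]

lemma isReduced_nil : cs.IsReduced ([] : List B) := by
  simp [CoxeterSystem.IsReduced]

end Aux

theorem psi_vanishes_unless_bruhat_le
    {B W F : Type*} [Field F] [Group W] [MulSemiringAction W F]
    {M : CoxeterMatrix B} (cs : CoxeterSystem M W) (a : B → F)
    (Tw : W → Module.End ℤ F)
    (hTw : ∀ ω : List B, cs.IsReduced ω → Tw (cs.wordProd ω) = Tword cs a ω)
    (Pair : Module.End ℤ F → (W → F) → F)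
    (hPadd : ∀ x y φ, Pair (x + y) φ = Pair x φ + Pair y φ)
    (hPmul : ∀ (q : F) x φ, Pair (mulOp q * x) φ = q * Pair x φ)
    (hPgrp : ∀ (w : W) (φ : W → F), Pair (grpOp w) φ = φ w)
    (ψ : W → W → F)
    (hψ : ∀ v u : W, Pair (Tw u) (ψ v) = if v = u then 1 else 0) :
    ∀ v w : W, ¬ BruhatLE cs v w → ψ v w = 0 := by
  intro v w hnb
  have hP0 : ∀ φ, Pair 0 φ = 0 := by
    intro φ
    have h := hPadd 0 0 φ
    rw [add_zero] at h
    exact (left_eq_add.mp h)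
  have hPneg : ∀ x φ, Pair (-x) φ = -Pair x φ := by
    intro x φ
    have h := hPadd x (-x) φ
    rw [add_neg_cancel, hP0] at h
    exact eq_neg_of_add_eq_zero_right h.symm
  by_cases hdeg : ∀ i : B, a i ≠ 1
  case neg =>
    push_neg at hdeg
    obtain ⟨i, hi⟩ := hdeg
    exfalso
    have hred : cs.IsReduced [i] := by
      simp [CoxeterSystem.IsReduced, cs.length_simple]
    have hT : Tw (cs.simple i) = 0 := by
      have h := hTw [i] hred
      rw [cs.wordProd_singleton] at h
      rw [h, Tword_cons, Tword_nil, mul_one, TOp, hi]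
      simp [mulOp_zero]
    have h1 := hψ (cs.simple i) (cs.simple i)
    rw [hT, hP0, if_pos rfl] at h1
    exact one_ne_zero h1.symm
  case pos =>
    have ha := hdeg
    -- the additive subgroup generated by `mulOp q * T_τ` over reduced sublists
    set G : List B → AddSubgroup (Module.End ℤ F) := fun ω =>
      AddSubgroup.closure {x | ∃ (q : F) (τ : List B),
        cs.IsReduced τ ∧ τ.Sublist ω ∧ x = mulOp q * Tword cs a τ} with hGdef
    have hmono : ∀ {ω ω' : List B}, ω.Sublist ω' → G ω ≤ G ω' := by
      intro ω ω' hsub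
      apply AddSubgroup.closure_mono
      rintro x ⟨q, τ, hτ, hs, rfl⟩
      exact ⟨q, τ, hτ, hs.trans hsub, rfl⟩
    -- key absorption lemma
    have key1 : ∀ (q : F) (i : B) (t τ : List B), cs.IsReduced τ → τ.Sublist t →
        mulOp q * Tword cs a (i :: τ) ∈ G (i :: t) := by
      intro q i t τ hτ hsub
      by_cases hred : cs.IsReduced (i :: τ)
      · exact AddSubgroup.subset_closure ⟨q, i :: τ, hred, hsub.cons₂ i, rfl⟩
      · rcases cs.length_simple_mul (cs.wordProd τ) i with h | h
        · exfalso
          apply hred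
          unfold CoxeterSystem.IsReduced
          rw [cs.wordProd_cons, h, hτ, List.length_cons]
        · obtain ⟨τ', hlen', hprod'⟩ := cs.exists_reduced_word (cs.simple i * cs.wordProd τ)
          have hπ : cs.wordProd (i :: τ') = cs.wordProd τ := by
            rw [cs.wordProd_cons, ← hprod', ← mul_assoc, cs.simple_mul_simple_self, one_mul]
          have hred' : cs.IsReduced (i :: τ') := by
            unfold CoxeterSystem.IsReduced
            rw [hπ, List.length_cons, ← hlen'.eq, ← hprod']
            omega
          have e2 : Tw (cs.wordProd τ) = TOp (a i) (cs.simple i) * Tword cs a τ' := by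
            rw [← hπ, hTw _ hred', Tword_cons]
          have e3 : Tword cs a (i :: τ) =
              mulOp (-((1 - a i)⁻¹ + cs.simple i • (1 - a i)⁻¹)) * Tw (cs.wordProd τ) := by
            rw [Tword_cons, ← hTw τ hτ, e2, ← mul_assoc,
              TOp_sq _ _ (cs.simple_mul_simple_self i), mul_assoc, ← e2]
          have e4 : mulOp q * Tword cs a (i :: τ) =
              mulOp (q * -((1 - a i)⁻¹ + cs.simple i • (1 - a i)⁻¹)) * Tword cs a τ := by
            rw [e3, ← mul_assoc, ← mulOp_mul, hTw τ hτ]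
          rw [e4]
          exact AddSubgroup.subset_closure ⟨_, τ, hτ, hsub.cons i, rfl⟩
    -- multiplication by mulOp q * T_i maps G t into G (i :: t)
    have keyT : ∀ (q : F) (i : B) (t : List B) (x : Module.End ℤ F), x ∈ G t →
        mulOp q * (TOp (a i) (cs.simple i) * x) ∈ G (i :: t) := by
      intro q i t x hx
      refine AddSubgroup.closure_induction (fun y hy => ?_) ?_
        (fun y z _ _ hy hz => ?_) (fun y _ hy => ?_) hx
      · obtain ⟨r, τ, hτ, hsub, rfl⟩ := hy
        have e : mulOp q * (TOp (a i) (cs.simple i) * (mulOp r * Tword cs a τ)) =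
            mulOp (q * cs.simple i • r) * Tword cs a (i :: τ)
            + mulOp (q * ((1 - a i)⁻¹ * (cs.simple i • r - r))) * Tword cs a τ := by
          rw [← mul_assoc (TOp (a i) (cs.simple i)) (mulOp r), TOp_mulOp, Tword_cons]
          simp only [mulOp_mul, add_mul, mul_add, mul_assoc]
        rw [e]
        exact add_mem (key1 _ i t τ hτ hsub)
          (AddSubgroup.subset_closure ⟨_, τ, hτ, hsub.cons i, rfl⟩)
      · rw [mul_zero, mul_zero]; exact zero_mem _
      · rw [mul_add, mul_add]; exact add_mem hy hz
      · rw [mul_neg, mul_neg]; exact neg_mem hy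
    -- group elements lie in G
    have lemB : ∀ ω : List B, grpOp (cs.wordProd ω) ∈ G ω := by
      intro ω
      induction ω with
      | nil =>
        rw [cs.wordProd_nil]
        have e : (grpOp (1 : W) : Module.End ℤ F) = mulOp (1 : F) * Tword cs a [] := by
          rw [Tword_nil, mulOp_one, mul_one, grpOp_one]
        rw [e]
        exact AddSubgroup.subset_closure ⟨1, [], isReduced_nil cs, List.nil_sublist _, rfl⟩
      | cons i t ih =>
        rw [cs.wordProd_cons, grpOp_mul, grp_decomp (a i) (ha i) (cs.simple i),
          add_mul, one_mul, mul_assoc]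
        exact add_mem (keyT (1 - a i) i t _ ih)
          (hmono (List.sublist_cons_self i t) ih)
    -- conclude
    obtain ⟨ω, hred, hw⟩ := cs.exists_reduced_word' w
    have hzero : ∀ x ∈ G ω, Pair x (ψ v) = 0 := by
      intro x hx
      refine AddSubgroup.closure_induction (fun y hy => ?_) (hP0 _)
        (fun y z _ _ hy hz => by rw [hPadd, hy, hz, add_zero])
        (fun y _ hy => by rw [hPneg, hy, neg_zero]) hx
      obtain ⟨r, τ, hτ, hsub, rfl⟩ := hy
      have hne : v ≠ cs.wordProd τ := fun hh => hnb ⟨ω, hred, hw.symm, τ, hsub, hh.symm⟩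
      rw [hPmul, ← hTw τ hτ, hψ, if_neg hne, mul_zero]
    have hmem : grpOp w ∈ G ω := by rw [hw]; exact lemB ω
    have := hzero _ hmem
    rw [hPgrp w (ψ v)] at this
    exact this

end
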